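/- (Lemma 4.4, case (ii).) Let {x^k} be a sequence generated by Algorithm 3.1 with data M > 0 and x⁰, let r > 0 be such that M is a Lipschitz constant of f on the closed ball B(x⁰, r), suppose the closed ball B(x⁰, r/2) contains a point of Q, and suppose the envelope f is strictly convex. Then {x^k} has at least one accumulation point, and every accumulation point x* of {x^k} satisfies f(x*) ≤ 0 (i.e., x* ∈ Q). -/

import Mathlib

open Filter Topology

noncomputable section

abbrev Euc (n : ℕ) := EuclideanSpace ℝ (Fin n)

/-- `ξ` is a subgradient of `g` at `x`. -/
def IsSubgradAt {n : ℕ} (g : Euc n → ℝ) (x ξ : Euc n) : Prop :=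
  ∀ y : Euc n, g x + (inner ℝ ξ (y - x) : ℝ) ≤ g y

/-- The envelope `f(x) = max_i f_i(x)` of finitely many functions. -/
def envl {n m : ℕ} [NeZero m] (f : Fin m → Euc n → ℝ) (x : Euc n) : ℝ :=
  Finset.univ.sup' Finset.univ_nonempty fun i => f i x

lemma le_envl {n m : ℕ} [NeZero m] (f : Fin m → Euc n → ℝ) (i : Fin m) (y : Euc n) :
    f i y ≤ envl f y := by
  unfold envl; exact Finset.le_sup' (fun j => f j y) (Finset.mem_univ i)

lemma isSubgradAt_combo {n m : ℕ} [NeZero m] (f : Fin m → Euc n → ℝ) (p : Euc n)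
    (w : Fin m → ℝ) (ξ : Fin m → Euc n) (hw0 : ∀ i, 0 ≤ w i) (hw1 : (∑ i, w i) = 1)
    (hact : ∀ i, f i p < envl f p → w i = 0) (hξ : ∀ i, IsSubgradAt (f i) p (ξ i)) :
    IsSubgradAt (envl f) p (∑ i, w i • ξ i) := by
  intro y
  have e1 : ∑ i, w i * f i p = envl f p := by
    have : ∀ i ∈ Finset.univ, w i * f i p = w i * envl f p := by
      intro i _
      rcases lt_or_eq_of_le (le_envl f i p) with h | h
      · rw [hact i h]; ring
      · rw [h]
    rw [Finset.sum_congr rfl this, ← Finset.sum_mul, hw1, one_mul]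
  have h1 : (inner ℝ (∑ i, w i • ξ i) (y - p) : ℝ) = ∑ i, w i * (inner ℝ (ξ i) (y - p) : ℝ) := by
    rw [sum_inner]
    exact Finset.sum_congr rfl fun i _ => real_inner_smul_left _ _ _
  calc envl f p + (inner ℝ (∑ i, w i • ξ i) (y - p) : ℝ)
      = ∑ i, w i * (f i p + (inner ℝ (ξ i) (y - p) : ℝ)) := by
        rw [h1, ← e1]; rw [← Finset.sum_add_distrib]
        exact Finset.sum_congr rfl fun i _ => by ring
    _ ≤ ∑ i, w i * f i y :=
        Finset.sum_le_sum fun i _ => mul_le_mul_of_nonneg_left (hξ i y) (hw0 i)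
    _ ≤ ∑ i, w i * envl f y :=
        Finset.sum_le_sum fun i _ => mul_le_mul_of_nonneg_left (le_envl f i y) (hw0 i)
    _ = envl f y := by rw [← Finset.sum_mul, hw1, one_mul]

lemma subgrad_norm_le {n : ℕ} (F : Euc n → ℝ) (x0 : Euc n) (r M : ℝ) (hM : 0 < M)
    (hLip : ∀ y z : Euc n, y ∈ Metric.closedBall x0 r → z ∈ Metric.closedBall x0 r →
      |F y - F z| ≤ M * ‖y - z‖)
    {p ν : Euc n} (hp : ‖p - x0‖ < r) (hsub : IsSubgradAt F p ν) : ‖ν‖ ≤ M := by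
  rcases eq_or_ne ν 0 with rfl | hν
  · simpa using hM.le
  have hνpos : 0 < ‖ν‖ := norm_pos_iff.mpr hν
  set t := r - ‖p - x0‖ with ht
  have htpos : 0 < t := by simp only [ht]; linarith
  set y := p + (t / ‖ν‖) • ν with hy
  have hyp : y - p = (t / ‖ν‖) • ν := by rw [hy]; abel
  have hnyp : ‖y - p‖ = t := by
    rw [hyp, norm_smul, Real.norm_eq_abs, abs_of_nonneg (by positivity)]
    field_simp
  have hyball : y ∈ Metric.closedBall x0 r := by
    rw [Metric.mem_closedBall, dist_eq_norm]
    have e : y - x0 = (p - x0) + (t / ‖ν‖) • ν := by rw [hy]; abel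
    calc ‖y - x0‖ ≤ ‖p - x0‖ + ‖(t / ‖ν‖) • ν‖ := by rw [e]; exact norm_add_le _ _
      _ = ‖p - x0‖ + t := by
          rw [norm_smul, Real.norm_eq_abs, abs_of_nonneg (by positivity)]
          field_simp
      _ = r := by rw [ht]; ring
  have hpball : p ∈ Metric.closedBall x0 r := by
    rw [Metric.mem_closedBall, dist_eq_norm]; linarith
  have h := hsub y
  have hin : (inner ℝ ν (y - p) : ℝ) = t * ‖ν‖ := by
    rw [hyp, real_inner_smul_right, real_inner_self_eq_norm_sq]
    field_simp
  have hlip := hLip y p hyball hpball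
  rw [hnyp] at hlip
  have : t * ‖ν‖ ≤ M * t := by
    calc t * ‖ν‖ = (inner ℝ ν (y - p) : ℝ) := hin.symm
      _ ≤ F y - F p := by linarith
      _ ≤ |F y - F p| := le_abs_self _
      _ ≤ M * t := hlip
  nlinarith

def gap {n m : ℕ} [NeZero m] (f : Fin m → Euc n → ℝ) (z p : Euc n) : ℝ :=
  (envl f p + envl f z) / 2 - envl f ((1/2 : ℝ) • (p + z))

lemma gap_nonneg {n m : ℕ} [NeZero m] {f : Fin m → Euc n → ℝ}
    (hc : ConvexOn ℝ Set.univ (envl f)) (z p : Euc n) : 0 ≤ gap f z p := by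
  have h := hc.2 (Set.mem_univ p) (Set.mem_univ z) (by norm_num : (0:ℝ) ≤ 1/2)
    (by norm_num : (0:ℝ) ≤ 1/2) (by norm_num)
  have e : (1/2 : ℝ) • p + (1/2 : ℝ) • z = (1/2 : ℝ) • (p + z) := (smul_add _ _ _).symm
  rw [e] at h
  simp only [smul_eq_mul] at h
  simp only [gap]; linarith

lemma gap_pos {n m : ℕ} [NeZero m] {f : Fin m → Euc n → ℝ}
    (hs : StrictConvexOn ℝ Set.univ (envl f)) {z p : Euc n} (hne : p ≠ z) : 0 < gap f z p := by
  have h := hs.2 (Set.mem_univ p) (Set.mem_univ z) hne (by norm_num : (0:ℝ) < 1/2)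
    (by norm_num : (0:ℝ) < 1/2) (by norm_num)
  have e : (1/2 : ℝ) • p + (1/2 : ℝ) • z = (1/2 : ℝ) • (p + z) := (smul_add _ _ _).symm
  rw [e] at h
  simp only [smul_eq_mul] at h
  simp only [gap]; linarith

lemma gap_cont {n m : ℕ} [NeZero m] {f : Fin m → Euc n → ℝ}
    (hc : Continuous (envl f)) (z : Euc n) : Continuous (gap f z) := by
  unfold gap; fun_prop

lemma gap_subgrad {n m : ℕ} [NeZero m] {f : Fin m → Euc n → ℝ} {z p ν : Euc n}
    (hsub : IsSubgradAt (envl f) p ν) :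
    envl f p - envl f z + 2 * gap f z p ≤ (inner ℝ ν (p - z) : ℝ) := by
  have h := hsub ((1/2 : ℝ) • (p + z))
  have e : (1/2 : ℝ) • (p + z) - p = (1/2 : ℝ) • (z - p) := by
    rw [smul_add, smul_sub]; module
  rw [e, real_inner_smul_right] at h
  have e2 : (inner ℝ ν (z - p) : ℝ) = -(inner ℝ ν (p - z) : ℝ) := by
    rw [show z - p = -(p - z) by abel, inner_neg_right]
  rw [e2] at h
  simp only [gap]; linarith

/-- The sequence `x` with relaxation parameters `lam` is generated by Algorithm 3.1
with data `M` for the family `f`. -/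
def IsAlgSeq {n m : ℕ} [NeZero m] (f : Fin m → Euc n → ℝ) (M : ℝ)
    (x : ℕ → Euc n) (lam : ℕ → ℝ) : Prop :=
  ∀ k : ℕ, 0 ≤ lam k ∧
    max 0 (envl f (x k)) ≤ lam k * M ^ 2 ∧
    lam k * M ^ 2 ≤ 2 * max 0 (envl f (x k)) ∧
    ∃ (w : Fin m → ℝ) (ξ : Fin m → Euc n),
      (∀ i, 0 ≤ w i) ∧ (∑ i, w i) = 1 ∧
      (∀ i, f i (x k) < envl f (x k) → w i = 0) ∧
      (∀ i, IsSubgradAt (f i) (x k) (ξ i)) ∧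
      x (k + 1) = x k - lam k • ∑ i, w i • ξ i

lemma step_ineq {n m : ℕ} [NeZero m] {f : Fin m → Euc n → ℝ}
    {M : ℝ} (hM : 0 < M) {x : ℕ → Euc n} {lam : ℕ → ℝ}
    (halg : IsAlgSeq f M x lam) {x0 : Euc n} {r : ℝ}
    (hLip : ∀ y z : Euc n, y ∈ Metric.closedBall x0 r → z ∈ Metric.closedBall x0 r →
      |envl f y - envl f z| ≤ M * ‖y - z‖)
    {z : Euc n} (hzF : envl f z ≤ 0)
    (k : ℕ) (hball : ‖x k - x0‖ < r) :
    ‖x (k+1) - z‖ ^ 2 ≤ ‖x k - z‖ ^ 2 - 4 * lam k * gap f z (x k) := by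
  obtain ⟨hl0, hl1, hl2, w, ξ, hw0, hw1, hact, hξ, hrec⟩ := halg k
  set ν : Euc n := ∑ i, w i • ξ i with hν
  have hsub : IsSubgradAt (envl f) (x k) ν :=
    isSubgradAt_combo f (x k) w ξ hw0 hw1 hact hξ
  have hxz : x (k+1) - z = (x k - z) - lam k • ν := by rw [hrec]; abel
  have eq1 : ‖x (k+1) - z‖ ^ 2
      = ‖x k - z‖ ^ 2 - 2 * (lam k * (inner ℝ (x k - z) ν : ℝ)) + lam k ^ 2 * ‖ν‖ ^ 2 := by
    rw [hxz, norm_sub_sq_real, real_inner_smul_right, norm_smul, mul_pow, Real.norm_eq_abs,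
      sq_abs]
  by_cases hpos : 0 < envl f (x k)
  · have hmax : max 0 (envl f (x k)) = envl f (x k) := max_eq_right hpos.le
    rw [hmax] at hl1 hl2
    have hνM : ‖ν‖ ≤ M := subgrad_norm_le (envl f) x0 r M hM hLip hball hsub
    have hin : envl f (x k) + 2 * gap f z (x k) ≤ (inner ℝ ν (x k - z) : ℝ) := by
      have := gap_subgrad (z := z) hsub
      linarith
    have hcomm : (inner ℝ (x k - z) ν : ℝ) = (inner ℝ ν (x k - z) : ℝ) := real_inner_comm _ _
    have h5 : lam k * (lam k * M ^ 2) ≤ lam k * (2 * envl f (x k)) :=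
      mul_le_mul_of_nonneg_left hl2 hl0
    have h6 : lam k * (envl f (x k) + 2 * gap f z (x k)) ≤ lam k * (inner ℝ ν (x k - z) : ℝ) :=
      mul_le_mul_of_nonneg_left hin hl0
    have h7 : lam k ^ 2 * ‖ν‖ ^ 2 ≤ lam k ^ 2 * M ^ 2 :=
      mul_le_mul_of_nonneg_left (pow_le_pow_left₀ (norm_nonneg _) hνM 2) (sq_nonneg _)
    rw [eq1, hcomm]
    nlinarith [sq_nonneg (lam k)]
  · push_neg at hpos
    have hmax : max 0 (envl f (x k)) = 0 := max_eq_left hpos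
    rw [hmax] at hl1 hl2
    have hM2 : (0:ℝ) < M ^ 2 := by positivity
    have hlz : lam k = 0 := by nlinarith
    have : x (k+1) = x k := by rw [hrec, hlz, zero_smul, sub_zero]
    rw [this, hlz]
    ring_nf
    simp

lemma bounded_iterates {n m : ℕ} [NeZero m] {f : Fin m → Euc n → ℝ}
    {M : ℝ} (hM : 0 < M) {x : ℕ → Euc n} {lam : ℕ → ℝ}
    (halg : IsAlgSeq f M x lam) {x0 : Euc n} (hx0 : x 0 = x0) {r : ℝ} (hr : 0 < r)
    (hLip : ∀ y z : Euc n, y ∈ Metric.closedBall x0 r → z ∈ Metric.closedBall x0 r →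
      |envl f y - envl f z| ≤ M * ‖y - z‖)
    {z : Euc n} (hzball : z ∈ Metric.closedBall x0 (r / 2)) (hzF : envl f z ≤ 0)
    (hstrict : StrictConvexOn ℝ Set.univ (envl f)) :
    ∀ k, ‖x k - x0‖ < r ∧ ‖x k - z‖ ≤ r / 2 := by
  have hzx0 : ‖z - x0‖ ≤ r / 2 := by
    rw [← dist_eq_norm]; exact Metric.mem_closedBall.mp hzball
  have hz0 : ‖x 0 - z‖ ≤ r / 2 := by
    rw [hx0]
    calc ‖x0 - z‖ = ‖z - x0‖ := by rw [norm_sub_rev]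
      _ ≤ r / 2 := hzx0
  have hfix : ∀ k, lam k = 0 → x (k+1) = x k := by
    intro k h
    obtain ⟨_, _, _, w, ξ, _, _, _, _, hrec⟩ := halg k
    rw [hrec, h, zero_smul, sub_zero]
  have hposF : ∀ k, 0 < lam k → 0 < envl f (x k) := by
    intro k hk
    obtain ⟨hl0, hl1, hl2, -⟩ := halg k
    by_contra h
    push_neg at h
    rw [max_eq_left h] at hl2
    have := mul_pos hk (pow_pos hM 2)
    linarith
  have inv : ∀ k, ‖x k - z‖ ≤ ‖x 0 - z‖ ∧ (x k = x 0 ∨ ‖x k - z‖ < ‖x 0 - z‖) := by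
    intro k
    induction k with
    | zero => exact ⟨le_rfl, Or.inl rfl⟩
    | succ k ih =>
      have hball : ‖x k - x0‖ < r := by
        rcases ih.2 with h | h
        · rw [h, hx0]; simpa using hr
        · have ht : ‖x k - x0‖ ≤ ‖x k - z‖ + ‖z - x0‖ := by
            have := dist_triangle (x k) z x0
            simpa [dist_eq_norm] using this
          linarith
      have hstep := step_ineq hM halg hLip hzF k hball
      rcases (halg k).1.eq_or_lt with h | h
      · have hx' : x (k+1) = x k := hfix k h.symm
        rw [hx']; exact ih
      · have hFk : 0 < envl f (x k) := hposF k h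
        have hne : x k ≠ z := by
          intro hh; rw [hh] at hFk; linarith
        have hg : 0 < gap f z (x k) := gap_pos hstrict hne
        have hlt : ‖x (k+1) - z‖ ^ 2 < ‖x k - z‖ ^ 2 := by
          have hpos4 : 0 < 4 * lam k * gap f z (x k) := by positivity
          linarith
        have hlt' : ‖x (k+1) - z‖ < ‖x k - z‖ :=
          lt_of_pow_lt_pow_left₀ 2 (norm_nonneg _) hlt
        exact ⟨le_of_lt (lt_of_lt_of_le hlt' ih.1), Or.inr (lt_of_lt_of_le hlt' ih.1)⟩
  intro k
  refine ⟨?_, le_trans (inv k).1 hz0⟩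
  rcases (inv k).2 with h | h
  · rw [h, hx0]; simpa using hr
  · have ht : ‖x k - x0‖ ≤ ‖x k - z‖ + ‖z - x0‖ := by
      have := dist_triangle (x k) z x0
      simpa [dist_eq_norm] using this
    linarith

theorem stmt6
    {n m : ℕ} (hn : 0 < n) [NeZero m] (f : Fin m → Euc n → ℝ)
    (hconv : ∀ i, ConvexOn ℝ Set.univ (f i))
    (M : ℝ) (hM : 0 < M) (x : ℕ → Euc n) (lam : ℕ → ℝ)
    (halg : IsAlgSeq f M x lam) (x0 : Euc n) (hx0 : x 0 = x0)
    (r : ℝ) (hr : 0 < r)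
    (hLip : ∀ y z : Euc n, y ∈ Metric.closedBall x0 r → z ∈ Metric.closedBall x0 r →
      |envl f y - envl f z| ≤ M * ‖y - z‖)
    (hfeas : ∃ z : Euc n, z ∈ Metric.closedBall x0 (r / 2) ∧ envl f z ≤ 0)
    (hstrict : StrictConvexOn ℝ Set.univ (envl f)) :
    (∃ (xs : Euc n) (φ : ℕ → ℕ), StrictMono φ ∧ Tendsto (x ∘ φ) atTop (𝓝 xs)) ∧
    (∀ xs : Euc n, (∃ φ : ℕ → ℕ, StrictMono φ ∧ Tendsto (x ∘ φ) atTop (𝓝 xs)) →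
      envl f xs ≤ 0) := by
  obtain ⟨z, hzball, hzF⟩ := hfeas
  have hFconv : ConvexOn ℝ Set.univ (envl f) := hstrict.convexOn
  have hFcont : Continuous (envl f) :=
    continuousOn_univ.mp (hFconv.continuousOn isOpen_univ)
  have hbd := bounded_iterates hM halg hx0 hr hLip hzball hzF hstrict
  have hball : ∀ k, ‖x k - x0‖ < r := fun k => (hbd k).1
  have hmem : ∀ k, x k ∈ Metric.closedBall z (r / 2) := by
    intro k
    rw [Metric.mem_closedBall, dist_eq_norm]
    exact (hbd k).2
  constructor
  · obtain ⟨xs, -, φ, hφ, hconv'⟩ :=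
      tendsto_subseq_of_bounded Metric.isBounded_closedBall hmem
    exact ⟨xs, φ, hφ, hconv'⟩
  · rintro xs ⟨φ, hφ, hxs⟩
    by_contra hc
    push_neg at hc
    have hne : xs ≠ z := by intro h; rw [h] at hc; linarith
    have hGxs : 0 < gap f z xs := gap_pos hstrict hne
    set ε := envl f xs / 2 with hε
    set G0 := gap f z xs / 2 with hG0
    have hεpos : 0 < ε := by positivity
    have hG0pos : 0 < G0 := by positivity
    have h1 : ∀ᶠ y in 𝓝 xs, ε < envl f y :=
      (hFcont.tendsto xs).eventually (eventually_gt_nhds (by simp only [hε]; linarith))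
    have h2 : ∀ᶠ y in 𝓝 xs, G0 < gap f z y :=
      ((gap_cont hFcont z).tendsto xs).eventually
        (eventually_gt_nhds (by simp only [hG0]; linarith))
    have hU : ∀ᶠ j in atTop, ε < envl f (x (φ j)) ∧ G0 < gap f z (x (φ j)) :=
      hxs.eventually (h1.and h2)
    set A : ℕ → ℝ := fun k => ‖x k - z‖ ^ 2 with hA
    have hstep' : ∀ k, A (k+1) ≤ A k - 4 * lam k * gap f z (x k) :=
      fun k => step_ineq hM halg hLip hzF k (hball k)
    have hanti : Antitone A := by
      apply antitone_nat_of_succ_le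
      intro k
      have hl0 := (halg k).1
      have hg := gap_nonneg hFconv z (x k)
      have h4 : 0 ≤ 4 * lam k * gap f z (x k) := by positivity
      have := hstep' k
      linarith
    have hbdd : BddBelow (Set.range A) := by
      refine ⟨0, ?_⟩
      rintro v ⟨k, rfl⟩
      simp only [hA]
      positivity
    have htd : Tendsto A atTop (𝓝 (⨅ k, A k)) := tendsto_atTop_ciInf hanti hbdd
    have htd2 : Tendsto (fun k => A (k+1)) atTop (𝓝 (⨅ k, A k)) :=
      htd.comp (tendsto_add_atTop_nat 1)
    have hd : Tendsto (fun k => A k - A (k+1)) atTop (𝓝 0) := by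
      have := htd.sub htd2
      simpa using this
    have hdφ : Tendsto (fun j => A (φ j) - A (φ j + 1)) atTop (𝓝 0) :=
      hd.comp hφ.tendsto_atTop
    set c := 4 * (ε / M ^ 2) * G0 with hcdef
    have hcpos : 0 < c := by positivity
    have hev2 : ∀ᶠ j in atTop, A (φ j) - A (φ j + 1) < c :=
      hdφ.eventually (eventually_lt_nhds hcpos)
    have hev1 : ∀ᶠ j in atTop, c ≤ A (φ j) - A (φ j + 1) := by
      refine hU.mono fun j hj => ?_
      obtain ⟨hj1, hj2⟩ := hj
      set k := φ j
      obtain ⟨hl0, hl1, hl2, -⟩ := halg k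
      have hFk : envl f (x k) ≤ max 0 (envl f (x k)) := le_max_right _ _
      have hlam : ε / M ^ 2 < lam k := by
        rw [div_lt_iff₀ (by positivity)]
        calc ε < envl f (x k) := hj1
          _ ≤ max 0 (envl f (x k)) := hFk
          _ ≤ lam k * M ^ 2 := hl1
      have := hstep' k
      have hmul : 4 * (ε / M ^ 2) * G0 ≤ 4 * lam k * gap f z (x k) := by
        have h0 : 0 < ε / M ^ 2 := by positivity
        nlinarith
      linarith
    obtain ⟨j, hj1, hj2⟩ := (hev1.and hev2).exists
    linarith
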